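/- Consider the 3-edge star graph consisting of one edge of length a and two edges of length b joined at a common interior vertex, with Dirichlet conditions at the three terminal vertices. The Cheeger constant inf { Per(D)/|D| } over admissible subsets D equals 3/(a+2b) if a ≤ 4b and 2/a if a > 4b. -/

import Mathlib

open MeasureTheory Filter Real Set
open scoped Classical

private lemma key15 (a b P M : ℝ) (ha : 0 < a) (hb : 0 < b) (hM : 0 < M)
    (h : 3 * M ≤ P * (a + 2 * b) ∨ 2 * M ≤ P * a ∨ 2 * M ≤ P * b) :
    (if a ≤ 4 * b then 3 / (a + 2 * b) else 2 / a) ≤ P / M := by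
  have hab : 0 < a + 2 * b := by linarith
  have h3 : (if a ≤ 4 * b then 3 / (a + 2 * b) else 2 / a) ≤ 3 / (a + 2 * b) := by
    split_ifs with h'
    · exact le_refl _
    · rw [div_le_div_iff₀ ha hab]; push_neg at h'; linarith
  have h2 : (if a ≤ 4 * b then 3 / (a + 2 * b) else 2 / a) ≤ 2 / a := by
    split_ifs with h'
    · rw [div_le_div_iff₀ hab ha]; linarith
    · exact le_refl _
  rcases h with h | h | h
  · refine h3.trans ?_
    rw [div_le_div_iff₀ hab hM]; linarith
  · refine h2.trans ?_
    rw [div_le_div_iff₀ ha hM]; linarith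
  · refine h3.trans ?_
    rw [div_le_div_iff₀ hab hM]
    have hP : 0 < P := by nlinarith
    nlinarith [mul_pos hP ha, mul_pos hP hb]

private lemma lb15 (a b : ℝ) (ha : 0 < a) (hb : 0 < b) (c d : Fin 3 → ℝ)
    (hc : ∀ i, 0 ≤ c i) (hcd : ∀ i, c i ≤ d i)
    (hd0 : d 0 ≤ a) (hd1 : d 1 ≤ b) (hd2 : d 2 ≤ b)
    (hne : ∃ i, c i < d i)
    (hM : 0 < ∑ i : Fin 3, (d i - c i)) :
    3 * (∑ i : Fin 3, (d i - c i)) ≤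
      ((∑ i : Fin 3, if c i < d i then (1 + if 0 < c i then (1:ℝ) else 0) else 0) +
        (if (∃ i, c i < d i ∧ c i = 0) ∧ (∃ i, ¬(c i < d i ∧ c i = 0)) then (1:ℝ) else 0))
        * (a + 2 * b) ∨
    2 * (∑ i : Fin 3, (d i - c i)) ≤
      ((∑ i : Fin 3, if c i < d i then (1 + if 0 < c i then (1:ℝ) else 0) else 0) +
        (if (∃ i, c i < d i ∧ c i = 0) ∧ (∃ i, ¬(c i < d i ∧ c i = 0)) then (1:ℝ) else 0))
        * a ∨
    2 * (∑ i : Fin 3, (d i - c i)) ≤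
      ((∑ i : Fin 3, if c i < d i then (1 + if 0 < c i then (1:ℝ) else 0) else 0) +
        (if (∃ i, c i < d i ∧ c i = 0) ∧ (∃ i, ¬(c i < d i ∧ c i = 0)) then (1:ℝ) else 0))
        * b := by
  have ht0 : (0:ℝ) ≤ if 0 < c 0 then (1:ℝ) else 0 := by positivity
  have ht1 : (0:ℝ) ≤ if 0 < c 1 then (1:ℝ) else 0 := by positivity
  have ht2 : (0:ℝ) ≤ if 0 < c 2 then (1:ℝ) else 0 := by positivity
  simp only [Fin.sum_univ_three]
  by_cases hall : ∀ i, c i < d i ∧ c i = 0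
  · left
    have hcen : ¬((∃ i, c i < d i ∧ c i = 0) ∧ (∃ i, ¬(c i < d i ∧ c i = 0))) := by
      rintro ⟨-, i, hi⟩; exact hi (hall i)
    have e0 := (hall 0).2; have e1 := (hall 1).2; have e2 := (hall 2).2
    simp only [hcen, if_false, (hall 0).1, (hall 1).1, (hall 2).1, if_true]
    linarith [mul_nonneg ht0 ha.le, mul_nonneg ht0 hb.le, mul_nonneg ht1 ha.le,
      mul_nonneg ht1 hb.le, mul_nonneg ht2 ha.le, mul_nonneg ht2 hb.le]
  · rw [not_forall] at hall
    by_cases hex : ∃ i, c i < d i ∧ c i = 0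
    · simp only [hex, hall, and_self, if_true, true_and]
      by_cases h0 : c 0 < d 0 <;> by_cases h1 : c 1 < d 1 <;> by_cases h2 : c 2 < d 2 <;>
        simp only [h0, h1, h2, if_true, if_false] <;>
      · try have e0 : d 0 = c 0 := le_antisymm (not_lt.1 h0) (hcd 0)
        try have e1 : d 1 = c 1 := le_antisymm (not_lt.1 h1) (hcd 1)
        try have e2 : d 2 = c 2 := le_antisymm (not_lt.1 h2) (hcd 2)
        first
          | ( left
              linarith [mul_nonneg ht0 ha.le, mul_nonneg ht0 hb.le, mul_nonneg ht1 ha.le,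
                mul_nonneg ht1 hb.le, mul_nonneg ht2 ha.le, mul_nonneg ht2 hb.le,
                hc 0, hc 1, hc 2])
          | ( right; left
              linarith [mul_nonneg ht0 ha.le, mul_nonneg ht0 hb.le, mul_nonneg ht1 ha.le,
                mul_nonneg ht1 hb.le, mul_nonneg ht2 ha.le, mul_nonneg ht2 hb.le,
                hc 0, hc 1, hc 2])
          | ( right; right
              linarith [mul_nonneg ht0 ha.le, mul_nonneg ht0 hb.le, mul_nonneg ht1 ha.le,
                mul_nonneg ht1 hb.le, mul_nonneg ht2 ha.le, mul_nonneg ht2 hb.le,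
                hc 0, hc 1, hc 2])
          | ( obtain ⟨i, hi⟩ := hne
              fin_cases i <;> simp_all)
    · simp only [hex, false_and, if_false]
      push_neg at hex
      by_cases h0 : c 0 < d 0 <;> by_cases h1 : c 1 < d 1 <;> by_cases h2 : c 2 < d 2 <;>
        simp only [h0, h1, h2, if_true, if_false] <;>
      · try have e0 : d 0 = c 0 := le_antisymm (not_lt.1 h0) (hcd 0)
        try have e1 : d 1 = c 1 := le_antisymm (not_lt.1 h1) (hcd 1)
        try have e2 : d 2 = c 2 := le_antisymm (not_lt.1 h2) (hcd 2)
        try have p0 : 0 < c 0 := lt_of_le_of_ne (hc 0) (Ne.symm (hex 0 h0))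
        try have p1 : 0 < c 1 := lt_of_le_of_ne (hc 1) (Ne.symm (hex 1 h1))
        try have p2 : 0 < c 2 := lt_of_le_of_ne (hc 2) (Ne.symm (hex 2 h2))
        try simp only [p0, if_true]
        try simp only [p1, if_true]
        try simp only [p2, if_true]
        first
          | (left; linarith [hc 0, hc 1, hc 2])
          | (right; left; linarith [hc 0, hc 1, hc 2])
          | (right; right; linarith [hc 0, hc 1, hc 2])
          | ( obtain ⟨i, hi⟩ := hne
              fin_cases i <;> simp_all)

private lemma mem15 (a b : ℝ) (ha : 0 < a) (hb : 0 < b) :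
    (if a ≤ 4 * b then 3 / (a + 2 * b) else 2 / a) ∈ {r : ℝ | ∃ c d : Fin 3 → ℝ,
        (∀ i, 0 ≤ c i) ∧ (∀ i, c i ≤ d i) ∧
        d 0 ≤ a ∧ d 1 ≤ b ∧ d 2 ≤ b ∧
        (∃ i, c i < d i) ∧
        r = ((∑ i : Fin 3, if c i < d i then (1 + if 0 < c i then (1:ℝ) else 0) else 0) +
              (if (∃ i, c i < d i ∧ c i = 0) ∧ (∃ i, ¬(c i < d i ∧ c i = 0))
                then (1:ℝ) else 0)) /
            ∑ i : Fin 3, (d i - c i)} := by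
  split_ifs with h
  · refine ⟨fun _ => 0, ![a, b, b], fun i => le_refl 0, ?_, le_refl a, le_refl b, le_refl b,
      ⟨0, ha⟩, ?_⟩
    · intro i; fin_cases i <;> simp [ha.le, hb.le]
    · rw [Fin.sum_univ_three, Fin.sum_univ_three]
      norm_num [ha, hb, Matrix.cons_val]
      have hC : ¬((∃ i : Fin 3, 0 < ![a,b,b] i) ∧ ∃ i : Fin 3, ![a,b,b] i ≤ 0) := by
        rintro ⟨-, i, hi⟩; fin_cases i <;> simp_all <;> linarith
      rw [if_neg hC]
      simp only [show ![a,b,b] 2 = b from rfl, hb, if_true]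
      ring
  · refine ⟨fun _ => 0, ![a, 0, 0], fun i => le_refl 0, ?_, le_refl a, hb.le, hb.le,
      ⟨0, ha⟩, ?_⟩
    · intro i; fin_cases i <;> simp [ha.le]
    · rw [Fin.sum_univ_three, Fin.sum_univ_three]
      norm_num [ha, Matrix.cons_val]
      have hC : ((∃ i : Fin 3, 0 < ![a,0,0] i) ∧ ∃ i : Fin 3, ![a,0,0] i ≤ 0) :=
        ⟨⟨0, by simp [ha]⟩, ⟨1, by simp⟩⟩
      rw [if_pos hC]
      simp only [show ![a,0,0] 2 = (0:ℝ) from rfl, lt_self_iff_false, if_false, add_zero]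
      norm_num

/-- Cheeger constant of the 3-star graph with one edge of length `a` and two edges of
length `b`, with Dirichlet conditions at the three terminal vertices. Each edge is
parametrized by `[0, length]` with `0` at the central vertex; an admissible set is a
union of one subinterval `[cᵢ, dᵢ]` per edge. Its measure is `Σ (dᵢ - cᵢ)`; its
perimeter counts, per nonempty edge-interval, the outer endpoint `dᵢ` (always a
boundary point, the Dirichlet vertex included) plus the inner endpoint when
`cᵢ > 0`, and the central vertex counts as one boundary point exactly when some but
not all edges attach to it. The infimum of perimeter/measure is `3/(a+2b)` when
`a ≤ 4b` and `2/a` when `a > 4b`. -/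
theorem stmt15 (a b : ℝ) (ha : 0 < a) (hb : 0 < b) :
    sInf {r : ℝ | ∃ c d : Fin 3 → ℝ,
        (∀ i, 0 ≤ c i) ∧ (∀ i, c i ≤ d i) ∧
        d 0 ≤ a ∧ d 1 ≤ b ∧ d 2 ≤ b ∧
        (∃ i, c i < d i) ∧
        r = ((∑ i : Fin 3, if c i < d i then (1 + if 0 < c i then (1:ℝ) else 0) else 0) +
              (if (∃ i, c i < d i ∧ c i = 0) ∧ (∃ i, ¬(c i < d i ∧ c i = 0))
                then (1:ℝ) else 0)) /
            ∑ i : Fin 3, (d i - c i)} =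
      if a ≤ 4 * b then 3 / (a + 2 * b) else 2 / a := by
  have hlb : ∀ r ∈ {r : ℝ | ∃ c d : Fin 3 → ℝ,
        (∀ i, 0 ≤ c i) ∧ (∀ i, c i ≤ d i) ∧
        d 0 ≤ a ∧ d 1 ≤ b ∧ d 2 ≤ b ∧
        (∃ i, c i < d i) ∧
        r = ((∑ i : Fin 3, if c i < d i then (1 + if 0 < c i then (1:ℝ) else 0) else 0) +
              (if (∃ i, c i < d i ∧ c i = 0) ∧ (∃ i, ¬(c i < d i ∧ c i = 0))
                then (1:ℝ) else 0)) /
            ∑ i : Fin 3, (d i - c i)},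
      (if a ≤ 4 * b then 3 / (a + 2 * b) else 2 / a) ≤ r := by
    rintro r ⟨c, d, hc, hcd, hd0, hd1, hd2, hne, rfl⟩
    have hM : 0 < ∑ i : Fin 3, (d i - c i) := by
      obtain ⟨j, hj⟩ := hne
      exact Finset.sum_pos' (fun i _ => sub_nonneg.2 (hcd i))
        ⟨j, Finset.mem_univ j, by linarith⟩
    exact key15 a b _ _ ha hb hM (lb15 a b ha hb c d hc hcd hd0 hd1 hd2 hne hM)
  exact le_antisymm (csInf_le ⟨_, fun r hr => hlb r hr⟩ (mem15 a b ha hb))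
    (le_csInf ⟨_, mem15 a b ha hb⟩ hlb)
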